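/- Define u(X,T) modulo 2π by cos(u(X,T)) = 8X² sech²(T)/(1 + X² sech²(T))² - 1 and sin(u(X,T)) = 4κ X sech(T)(1 - X² sech²(T))/(1 + X² sech²(T))², with κ = ±1. Then cos(u)² + sin(u)² = 1 for all real X, T, and u satisfies the sine-Gordon equation u_{TT} - u_{XX} + sin(u) = 0. -/

import Mathlib

open Real
lemma my_cos2 (y : ℝ) : Real.cos (2 * Real.arctan y) = (1 - y^2)/(1 + y^2) := by
  have h : (0:ℝ) < 1 + y^2 := by positivity
  rw [Real.cos_two_mul, Real.cos_sq_arctan]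
  field_simp
  ring

lemma my_sin2 (y : ℝ) : Real.sin (2 * Real.arctan y) = 2*y/(1 + y^2) := by
  have h : (0:ℝ) < 1 + y^2 := by positivity
  have h0 : Real.sqrt (1 + y^2) ^ 2 = 1 + y^2 := Real.sq_sqrt h.le
  have hne : Real.sqrt (1 + y^2) ≠ 0 := (Real.sqrt_pos.mpr h).ne'
  rw [Real.sin_two_mul, Real.sin_arctan, Real.cos_arctan]
  field_simp
  rw [h0]

lemma my_cos4 (y : ℝ) : Real.cos (4 * Real.arctan y) = (1 - 6*y^2 + y^4)/(1 + y^2)^2 := by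
  have h : (0:ℝ) < 1 + y^2 := by positivity
  rw [show (4:ℝ) * Real.arctan y = 2*(2*Real.arctan y) by ring, Real.cos_two_mul, my_cos2]
  field_simp
  ring

lemma my_sin4 (y : ℝ) : Real.sin (4 * Real.arctan y) = 4*y*(1 - y^2)/(1 + y^2)^2 := by
  have h : (0:ℝ) < 1 + y^2 := by positivity
  rw [show (4:ℝ) * Real.arctan y = 2*(2*Real.arctan y) by ring, Real.sin_two_mul, my_cos2, my_sin2]
  field_simp
  ring

lemma my_key (κ : ℝ) (hκ : κ = 1 ∨ κ = -1) (X T : ℝ) :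
    Real.cos (π - 4*κ*Real.arctan (X * (Real.cosh T)⁻¹)) =
      8 * X ^ 2 * ((Real.cosh T)⁻¹) ^ 2 / (1 + X ^ 2 * ((Real.cosh T)⁻¹) ^ 2) ^ 2 - 1 ∧
    Real.sin (π - 4*κ*Real.arctan (X * (Real.cosh T)⁻¹)) =
      4 * κ * X * (Real.cosh T)⁻¹ * (1 - X ^ 2 * ((Real.cosh T)⁻¹) ^ 2) /
        (1 + X ^ 2 * ((Real.cosh T)⁻¹) ^ 2) ^ 2 := by
  have hc := Real.cosh_pos T
  have h2 : (0:ℝ) < 1 + (X * (Real.cosh T)⁻¹) ^ 2 := by positivity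
  rw [Real.cos_pi_sub, Real.sin_pi_sub]
  rcases hκ with rfl | rfl
  · rw [show 4*(1:ℝ)*Real.arctan (X * (Real.cosh T)⁻¹) = 4*Real.arctan (X * (Real.cosh T)⁻¹)
      by ring, my_cos4, my_sin4]
    constructor
    · field_simp [hc.ne']; ring
    · field_simp [hc.ne']
  · rw [show 4*(-1:ℝ)*Real.arctan (X * (Real.cosh T)⁻¹) = -(4*Real.arctan (X * (Real.cosh T)⁻¹))
      by ring, Real.cos_neg, Real.sin_neg, my_cos4, my_sin4]
    constructor
    · field_simp [hc.ne']; ring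
    · field_simp [hc.ne']

lemma my_dT1 (κ X T : ℝ) :
    HasDerivAt (fun T' => π - 4*κ*Real.arctan (X * (Real.cosh T')⁻¹))
      (4*κ*X*Real.sinh T / (Real.cosh T^2 + X^2)) T := by
  have hc := Real.cosh_pos T
  have hden : (0:ℝ) < Real.cosh T^2 + X^2 := by positivity
  have hy : (0:ℝ) < 1 + (X * (Real.cosh T)⁻¹)^2 := by positivity
  have h1 : HasDerivAt (fun T' => X * (Real.cosh T')⁻¹)
      (X * (-Real.sinh T / Real.cosh T^2)) T :=
    ((Real.hasDerivAt_cosh T).inv hc.ne').const_mul X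
  have h2 := (Real.hasDerivAt_arctan (X * (Real.cosh T)⁻¹)).comp T h1
  have h3 := (h2.const_mul (4*κ)).const_sub π
  refine h3.congr_deriv ?_
  field_simp

lemma my_dT2 (κ X T : ℝ) :
    HasDerivAt (fun T' => 4*κ*X*Real.sinh T' / (Real.cosh T'^2 + X^2))
      ((4*κ*X*Real.cosh T * (Real.cosh T^2 + X^2) -
        4*κ*X*Real.sinh T * (2*Real.cosh T*Real.sinh T)) / (Real.cosh T^2 + X^2)^2) T := by
  have hc := Real.cosh_pos T
  have hden : (0:ℝ) < Real.cosh T^2 + X^2 := by positivity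
  have hnum : HasDerivAt (fun T' => 4*κ*X*Real.sinh T') (4*κ*X*Real.cosh T) T :=
    (Real.hasDerivAt_sinh T).const_mul _
  have hd : HasDerivAt (fun T' => Real.cosh T'^2 + X^2) (2*Real.cosh T*Real.sinh T) T := by
    have := ((Real.hasDerivAt_cosh T).pow 2).add_const (X^2)
    refine this.congr_deriv ?_
    ring
  exact hnum.div hd hden.ne'

lemma my_dX1 (κ X T : ℝ) :
    HasDerivAt (fun X' => π - 4*κ*Real.arctan (X' * (Real.cosh T)⁻¹))
      (-(4*κ*Real.cosh T) / (Real.cosh T^2 + X^2)) X := by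
  have hc := Real.cosh_pos T
  have hden : (0:ℝ) < Real.cosh T^2 + X^2 := by positivity
  have hy : (0:ℝ) < 1 + (X * (Real.cosh T)⁻¹)^2 := by positivity
  have h1 : HasDerivAt (fun X' => X' * (Real.cosh T)⁻¹) ((Real.cosh T)⁻¹) X :=
    hasDerivAt_mul_const _
  have h2 := (Real.hasDerivAt_arctan (X * (Real.cosh T)⁻¹)).comp X h1
  have h3 := (h2.const_mul (4*κ)).const_sub π
  refine h3.congr_deriv ?_
  field_simp

lemma my_dX2 (κ X T : ℝ) :
    HasDerivAt (fun X' => -(4*κ*Real.cosh T) / (Real.cosh T^2 + X'^2))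
      (8*κ*X*Real.cosh T / (Real.cosh T^2 + X^2)^2) X := by
  have hc := Real.cosh_pos T
  have hden : (0:ℝ) < Real.cosh T^2 + X^2 := by positivity
  have hd : HasDerivAt (fun X' => Real.cosh T^2 + X'^2) (2*X) X := by
    have := ((hasDerivAt_pow 2 X).const_add (Real.cosh T^2))
    refine this.congr_deriv ?_
    ring
  have := (hasDerivAt_const X (-(4*κ*Real.cosh T))).div hd hden.ne'
  refine this.congr_deriv ?_
  field_simp
  ring

lemma my_const (g : ℝ × ℝ → ℝ) (hg : Continuous g)
    (h : ∀ p, ∃ k : ℤ, g p = 2*π*k) (p q : ℝ × ℝ) : g p = g q := by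
  have hπ := Real.pi_pos
  by_contra hne
  obtain ⟨m, hm⟩ := h p
  obtain ⟨n, hn⟩ := h q
  have hmn : m ≠ n := by
    intro h'; exact hne (by rw [hm, hn, h'])
  have hrange : Set.OrdConnected (Set.range g) := by
    have : IsPreconnected (Set.range g) := by
      rw [← Set.image_univ]
      exact isPreconnected_univ.image g hg.continuousOn
    exact this.ordConnected
  set a : ℤ := min m n with ha
  set b : ℤ := max m n with hb
  have hab : a + 1 ≤ b := by omega
  have habR : (a : ℝ) + 1 ≤ b := by exact_mod_cast hab
  set r : ℝ := 2*π*a + π with hr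
  have hrmem : r ∈ Set.uIcc (g p) (g q) := by
    rw [Set.mem_uIcc, hm, hn]
    have hminR : ((a:ℝ) = m ∧ (b:ℝ) = n) ∨ ((a:ℝ) = n ∧ (b:ℝ) = m) := by
      rcases le_total m n with hle | hle
      · left; constructor <;> · push_cast [ha, hb, min_eq_left hle, max_eq_right hle]; ring
      · right; constructor <;> · push_cast [ha, hb, min_eq_right hle, max_eq_left hle]; ring
    rcases hminR with ⟨h1, h2⟩ | ⟨h1, h2⟩
    · left; rw [← h1, ← h2]; constructor <;> nlinarith
    · right; rw [← h1, ← h2]; constructor <;> nlinarith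
  have : r ∈ Set.range g :=
    hrange.uIcc_subset (Set.mem_range_self p) (Set.mem_range_self q) hrmem
  obtain ⟨x, hx⟩ := this
  obtain ⟨k, hk⟩ := h x
  rw [hk] at hx
  have h2k : ((2*k : ℤ) : ℝ) = ((2*a + 1 : ℤ) : ℝ) := by push_cast; nlinarith [hx]
  have : (2*k : ℤ) = 2*a + 1 := by exact_mod_cast h2k
  omega


/-- the grazing-collision formulas define an angle (the expressions lie on
the unit circle) and the resulting `u(X,T)` solves the sine-Gordon equation
`u_TT - u_XX + sin u = 0`. -/
theorem stmt_9 (κ : ℝ) (hκ : κ = 1 ∨ κ = -1) (u : ℝ → ℝ → ℝ)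
    (hu : ContDiff ℝ 2 (Function.uncurry u))
    (hcos : ∀ X T : ℝ, Real.cos (u X T) =
      8 * X ^ 2 * ((Real.cosh T)⁻¹) ^ 2 / (1 + X ^ 2 * ((Real.cosh T)⁻¹) ^ 2) ^ 2 - 1)
    (hsin : ∀ X T : ℝ, Real.sin (u X T) =
      4 * κ * X * (Real.cosh T)⁻¹ * (1 - X ^ 2 * ((Real.cosh T)⁻¹) ^ 2) /
        (1 + X ^ 2 * ((Real.cosh T)⁻¹) ^ 2) ^ 2) :
    (∀ X T : ℝ,
      (8 * X ^ 2 * ((Real.cosh T)⁻¹) ^ 2 / (1 + X ^ 2 * ((Real.cosh T)⁻¹) ^ 2) ^ 2 - 1) ^ 2 +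
      (4 * κ * X * (Real.cosh T)⁻¹ * (1 - X ^ 2 * ((Real.cosh T)⁻¹) ^ 2) /
        (1 + X ^ 2 * ((Real.cosh T)⁻¹) ^ 2) ^ 2) ^ 2 = 1) ∧
    (∀ X T : ℝ,
      deriv (deriv fun T' => u X T') T - deriv (deriv fun X' => u X' T) X
        + Real.sin (u X T) = 0) := by
  constructor
  · intro X T
    rw [← hcos X T, ← hsin X T]
    exact Real.cos_sq_add_sin_sq _
  · -- key step: u differs from the explicit solution by a constant
    have hkey : ∀ X T : ℝ, ∃ k : ℤ,
        u X T - (π - 4*κ*Real.arctan (X * (Real.cosh T)⁻¹)) = 2*π*k := by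
      intro X T
      have hc : Real.cos (u X T) = Real.cos (π - 4*κ*Real.arctan (X * (Real.cosh T)⁻¹)) := by
        rw [hcos X T, (my_key κ hκ X T).1]
      have hs : Real.sin (u X T) = Real.sin (π - 4*κ*Real.arctan (X * (Real.cosh T)⁻¹)) := by
        rw [hsin X T, (my_key κ hκ X T).2]
      exact Real.Angle.angle_eq_iff_two_pi_dvd_sub.mp (Real.Angle.cos_sin_inj hc hs)
    have hgcont : Continuous (fun p : ℝ × ℝ =>
        u p.1 p.2 - (π - 4*κ*Real.arctan (p.1 * (Real.cosh p.2)⁻¹))) := by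
      apply hu.continuous.sub
      apply continuous_const.sub
      apply Continuous.mul continuous_const
      exact Real.continuous_arctan.comp (continuous_fst.mul
        ((Real.continuous_cosh.comp continuous_snd).inv₀ (fun x => (Real.cosh_pos _).ne')))
    set C : ℝ := u 0 0 - (π - 4*κ*Real.arctan (0 * (Real.cosh 0)⁻¹)) with hC
    have huv : ∀ X T : ℝ, u X T = (π - 4*κ*Real.arctan (X * (Real.cosh T)⁻¹)) + C := by
      intro X T
      have := my_const _ hgcont (fun p => hkey p.1 p.2) (X, T) (0, 0)
      simp only at this
      rw [hC]
      linarith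
    intro X T
    have e1 : (fun T' => u X T') =
        fun T' => (π - 4*κ*Real.arctan (X * (Real.cosh T')⁻¹)) + C := funext fun t => huv X t
    have e2 : (fun X' => u X' T) =
        fun X' => (π - 4*κ*Real.arctan (X' * (Real.cosh T)⁻¹)) + C := funext fun x => huv x T
    rw [e1, e2, hsin X T]
    have dT1 : deriv (fun T' => (π - 4*κ*Real.arctan (X * (Real.cosh T')⁻¹)) + C)
        = fun T' => 4*κ*X*Real.sinh T' / (Real.cosh T'^2 + X^2) :=
      funext fun t => ((my_dT1 κ X t).add_const C).deriv
    have dX1 : deriv (fun X' => (π - 4*κ*Real.arctan (X' * (Real.cosh T)⁻¹)) + C)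
        = fun X' => -(4*κ*Real.cosh T) / (Real.cosh T^2 + X'^2) :=
      funext fun x => ((my_dX1 κ x T).add_const C).deriv
    rw [dT1, dX1, (my_dT2 κ X T).deriv, (my_dX2 κ X T).deriv]
    have hc := Real.cosh_pos T
    have hs2 := Real.sinh_sq T
    have hden : (0:ℝ) < Real.cosh T^2 + X^2 := by positivity
    field_simp [hc.ne']
    linear_combination (-(8*κ*X*Real.cosh T)) * hs2
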